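/- Let a, b ≥ 1 be integers and ζ ∈ D^{a+b}, and set L := lim_{r→0+} ∫_r^∞ ζ(ρ) ρ^{a+b−1} dρ. Then lim_{(s,t)→(0,0), s,t>0} ∫_t^∞ ∫_s^∞ ζ(√(u²+v²)) u^{a−1} v^{b−1} du dv = ((a+b) ω_{a+b} / (a b ω_a ω_b)) · L. -/

import Mathlib

/-!
Statement 14: the double integral `∫_t^∞ ∫_s^∞ ζ(√(u²+v²)) u^{a-1} v^{b-1} du dv`
converges, as `(s,t) → (0,0)` with `s,t > 0`, to
`((a+b) ω_{a+b} / (a b ω_a ω_b)) · L`, where `L = lim_{r→0⁺} ∫_r^∞ ζ(ρ) ρ^{a+b-1} dρ`.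
-/

noncomputable section

open Filter Topology

/-- The volume `ω_m = π^{m/2} / Γ(m/2 + 1)` of the unit ball in `ℝ^m`. -/
def unitBallVol (m : ℕ) : ℝ := Real.pi ^ ((m : ℝ) / 2) / Real.Gamma ((m : ℝ) / 2 + 1)

open Real Set MeasureTheory

section helpers

/-- A function continuous on `(0,∞)` and vanishing on `(-∞,0]` is measurable. -/
lemma meas_aux {ζ : ℝ → ℝ} (hcont : ContinuousOn ζ (Set.Ioi 0))
    (hzero : ∀ t ≤ (0 : ℝ), ζ t = 0) : Measurable ζ := by
  apply measurable_of_isOpen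
  intro U hU
  have h1 : MeasurableSet (Set.Ioi (0:ℝ) ∩ ζ ⁻¹' U) :=
    (hcont.isOpen_inter_preimage isOpen_Ioi hU).measurableSet
  have h2 : ζ ⁻¹' U = (Set.Ioi (0:ℝ) ∩ ζ ⁻¹' U) ∪ (Set.Iic 0 ∩ ζ ⁻¹' U) := by
    ext x
    constructor
    · intro hx
      rcases lt_or_ge 0 x with h | h
      · exact Or.inl ⟨h, hx⟩
      · exact Or.inr ⟨h, hx⟩
    · rintro (⟨_, hx⟩ | ⟨_, hx⟩) <;> exact hx
  rw [h2]
  apply h1.union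
  by_cases h : (0:ℝ) ∈ U
  · have h3 : Set.Iic (0:ℝ) ∩ ζ ⁻¹' U = Set.Iic 0 := by
      ext x
      simp only [Set.mem_inter_iff, Set.mem_preimage, Set.mem_Iic, and_iff_left_iff_imp]
      intro hx
      rw [hzero x hx]; exact h
    rw [h3]
    exact measurableSet_Iic
  · have h3 : Set.Iic (0:ℝ) ∩ ζ ⁻¹' U = ∅ := by
      ext x
      simp only [Set.mem_inter_iff, Set.mem_preimage, Set.mem_empty_iff_false, iff_false,
        not_and, Set.mem_Iic]
      intro hx hmem
      exact h (by rw [← hzero x hx]; exact hmem)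
    rw [h3]
    exact MeasurableSet.empty

lemma theta_aux {θ : ℝ} (h1 : θ ∈ Set.Ioo (-π) π) (hc : 0 < Real.cos θ)
    (hs : 0 < Real.sin θ) : θ ∈ Set.Ioo 0 (π/2) := by
  constructor
  · by_contra h
    push_neg at h
    exact absurd (Real.sin_nonpos_of_nonpos_of_neg_pi_le h h1.1.le) (not_le.mpr hs)
  · by_contra h
    push_neg at h
    have := Real.cos_nonpos_of_pi_div_two_le_of_le h (by linarith [h1.2, Real.pi_pos])
    exact absurd this (not_le.mpr hc)

/-- Polar coordinates for integrals over the open first quadrant. -/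
lemma polar_quadrant (f : ℝ × ℝ → ℝ) (hf0 : ∀ z : ℝ × ℝ, f z ≠ 0 → 0 < z.1 ∧ 0 < z.2) :
    (∫ z in Set.Ioi (0:ℝ) ×ˢ Set.Ioo 0 (π/2),
      z.1 * f (z.1 * Real.cos z.2, z.1 * Real.sin z.2)) = ∫ z, f z := by
  rw [← integral_comp_polarCoord_symm f, polarCoord_target]
  rw [setIntegral_eq_of_subset_of_forall_diff_eq_zero
    (measurableSet_Ioi.prod measurableSet_Ioo)
    (Set.prod_mono subset_rfl (Set.Ioo_subset_Ioo (by linarith [Real.pi_pos] : -π ≤ 0)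
      (by linarith [Real.pi_pos] : π/2 ≤ π))) ?_]
  · apply setIntegral_congr_fun (measurableSet_Ioi.prod measurableSet_Ioo)
    intro p _
    simp only [polarCoord_symm_apply, smul_eq_mul]
  · intro p hp
    obtain ⟨⟨hρ, hθ⟩, hns⟩ := hp
    by_contra hne
    have hfne : f (polarCoord.symm p) ≠ 0 := by
      intro h
      exact hne (by rw [h, smul_zero])
    have h2 := hf0 _ hfne
    rw [polarCoord_symm_apply] at h2
    have h21 : 0 < p.1 * Real.cos p.2 := h2.1
    have h22 : 0 < p.1 * Real.sin p.2 := h2.2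
    have hρ' : (0:ℝ) < p.1 := hρ
    have hc : 0 < Real.cos p.2 := by
      by_contra h
      push_neg at h
      nlinarith [h21]
    have hsn : 0 < Real.sin p.2 := by
      by_contra h
      push_neg at h
      nlinarith [h22]
    exact hns ⟨hρ, theta_aux hθ hc hsn⟩

lemma gaussian_pow (n : ℕ) :
    ∫ x in Set.Ioi (0:ℝ), x ^ n * Real.exp (-x^2) = (1/2) * Real.Gamma (((n:ℝ)+1)/2) := by
  have h := integral_rpow_mul_exp_neg_rpow (p := 2) (q := (n:ℝ)) two_pos
    (lt_of_lt_of_le neg_one_lt_zero (Nat.cast_nonneg n))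
  rw [← h]
  apply setIntegral_congr_fun measurableSet_Ioi
  intro x _
  show x ^ n * Real.exp (-x^2) = x ^ ((n:ℕ):ℝ) * Real.exp (-x ^ (2:ℝ))
  rw [Real.rpow_natCast, show (2:ℝ) = ((2:ℕ):ℝ) by norm_num, Real.rpow_natCast]

lemma cos_sin_integral (p q : ℕ) :
    (∫ θ in Set.Ioo 0 (π/2), Real.cos θ ^ p * Real.sin θ ^ q)
      = Real.Gamma (((p:ℝ)+1)/2) * Real.Gamma (((q:ℝ)+1)/2)
        / (2 * Real.Gamma (((p:ℝ)+(q:ℝ)+2)/2)) := by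
  set f : ℝ × ℝ → ℝ := fun z =>
    (Set.Ioi (0:ℝ)).indicator (fun x => x ^ p * Real.exp (-x^2)) z.1 *
    (Set.Ioi (0:ℝ)).indicator (fun y => y ^ q * Real.exp (-y^2)) z.2 with hf
  have hf0 : ∀ z : ℝ × ℝ, f z ≠ 0 → 0 < z.1 ∧ 0 < z.2 := by
    intro z hz
    constructor
    · by_contra h
      apply hz
      rw [hf]
      simp only [Set.indicator_of_notMem (by simpa using h : z.1 ∉ Set.Ioi (0:ℝ)), zero_mul]
    · by_contra h
      apply hz
      rw [hf]
      simp only [Set.indicator_of_notMem (by simpa using h : z.2 ∉ Set.Ioi (0:ℝ)), mul_zero]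
  have hpolar := polar_quadrant f hf0
  have hR : (∫ z, f z) = ((1/2) * Real.Gamma (((p:ℝ)+1)/2)) *
      ((1/2) * Real.Gamma (((q:ℝ)+1)/2)) := by
    rw [hf, Measure.volume_eq_prod, integral_prod_mul,
      integral_indicator measurableSet_Ioi, integral_indicator measurableSet_Ioi,
      gaussian_pow, gaussian_pow]
  have hLpolar : (∫ z in Set.Ioi (0:ℝ) ×ˢ Set.Ioo 0 (π/2),
      z.1 * f (z.1 * Real.cos z.2, z.1 * Real.sin z.2))
      = (∫ x in Set.Ioi (0:ℝ), x ^ (p+q+1) * Real.exp (-x^2)) *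
        ∫ θ in Set.Ioo 0 (π/2), Real.cos θ ^ p * Real.sin θ ^ q := by
    rw [show (∫ z in Set.Ioi (0:ℝ) ×ˢ Set.Ioo 0 (π/2),
        z.1 * f (z.1 * Real.cos z.2, z.1 * Real.sin z.2))
        = ∫ z in Set.Ioi (0:ℝ) ×ˢ Set.Ioo 0 (π/2),
          (z.1 ^ (p+q+1) * Real.exp (-z.1^2)) * (Real.cos z.2 ^ p * Real.sin z.2 ^ q) from ?_]
    · rw [Measure.volume_eq_prod]
      exact setIntegral_prod_mul (fun x => x ^ (p+q+1) * Real.exp (-x^2))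
        (fun θ => Real.cos θ ^ p * Real.sin θ ^ q) _ _
    · apply setIntegral_congr_fun (measurableSet_Ioi.prod measurableSet_Ioo)
      intro z hz
      obtain ⟨hz1, hz2⟩ := hz
      have hz1' : (0:ℝ) < z.1 := hz1
      have hc : 0 < Real.cos z.2 := Real.cos_pos_of_mem_Ioo
        ⟨by linarith [Real.pi_pos, hz2.1], hz2.2⟩
      have hsn : 0 < Real.sin z.2 := Real.sin_pos_of_pos_of_lt_pi hz2.1
        (by linarith [Real.pi_pos, hz2.2])
      rw [hf]
      simp only
      rw [Set.indicator_of_mem (Set.mem_Ioi.mpr (mul_pos hz1' hc)),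
        Set.indicator_of_mem (Set.mem_Ioi.mpr (mul_pos hz1' hsn))]
      have hexp : Real.exp (-(z.1 * Real.cos z.2)^2) * Real.exp (-(z.1 * Real.sin z.2)^2)
          = Real.exp (-z.1^2) := by
        rw [← Real.exp_add]
        congr 1
        nlinarith [Real.sin_sq_add_cos_sq z.2]
      rw [← hexp]
      ring
  have hval : (∫ x in Set.Ioi (0:ℝ), x ^ (p+q+1) * Real.exp (-x^2))
      = (1/2) * Real.Gamma (((p:ℝ)+(q:ℝ)+2)/2) := by
    rw [gaussian_pow, show ((((p+q+1):ℕ):ℝ)+1)/2 = ((p:ℝ)+(q:ℝ)+2)/2 by push_cast; ring]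
  have heq : ((1/2) * Real.Gamma (((p:ℝ)+(q:ℝ)+2)/2)) *
      (∫ θ in Set.Ioo 0 (π/2), Real.cos θ ^ p * Real.sin θ ^ q)
      = ((1/2) * Real.Gamma (((p:ℝ)+1)/2)) * ((1/2) * Real.Gamma (((q:ℝ)+1)/2)) := by
    rw [← hval, ← hR, ← hpolar, hLpolar]
  have hS : 0 < Real.Gamma (((p:ℝ)+(q:ℝ)+2)/2) := Real.Gamma_pos_of_pos (by positivity)
  rw [eq_div_iff (by positivity)]
  linear_combination 4 * heq

lemma const_eq (a b : ℕ) (ha : 1 ≤ a) (hb : 1 ≤ b) :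
    ((a:ℝ) + b) * unitBallVol (a+b) / ((a:ℝ) * b * unitBallVol a * unitBallVol b)
      = Real.Gamma ((b:ℝ)/2) * Real.Gamma ((a:ℝ)/2) / (2 * Real.Gamma (((a:ℝ)+(b:ℝ))/2)) := by
  have ha' : (0:ℝ) < a := by exact_mod_cast Nat.pos_of_ne_zero (by omega)
  have hb' : (0:ℝ) < b := by exact_mod_cast Nat.pos_of_ne_zero (by omega)
  unfold unitBallVol
  rw [show ((a+b : ℕ):ℝ) = (a:ℝ) + b by push_cast; ring]
  rw [Real.Gamma_add_one (s := ((a:ℝ)+b)/2) (by positivity),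
    Real.Gamma_add_one (s := (a:ℝ)/2) (by positivity),
    Real.Gamma_add_one (s := (b:ℝ)/2) (by positivity)]
  rw [show Real.pi ^ (((a:ℝ)+b)/2) = Real.pi ^ ((a:ℝ)/2) * Real.pi ^ ((b:ℝ)/2) by
    rw [← Real.rpow_add Real.pi_pos]; ring_nf]
  have h1 : 0 < Real.Gamma ((a:ℝ)/2) := Real.Gamma_pos_of_pos (by positivity)
  have h2 : 0 < Real.Gamma ((b:ℝ)/2) := Real.Gamma_pos_of_pos (by positivity)
  have h3 : 0 < Real.Gamma (((a:ℝ)+b)/2) := Real.Gamma_pos_of_pos (by positivity)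
  have h4 : 0 < Real.pi ^ ((a:ℝ)/2) := Real.rpow_pos_of_pos Real.pi_pos _
  have h5 : 0 < Real.pi ^ ((b:ℝ)/2) := Real.rpow_pos_of_pos Real.pi_pos _
  field_simp

end helpers

set_option maxHeartbeats 1000000 in
/-- For `ζ ∈ D^{a+b}` with
`L = lim_{r→0⁺} ∫_r^∞ ζ(ρ) ρ^{a+b-1} dρ`, one has
`∫_t^∞ ∫_s^∞ ζ(√(u²+v²)) u^{a-1} v^{b-1} du dv → ((a+b) ω_{a+b}/(a b ω_a ω_b)) L`
as `(s,t) → (0,0)`, `s,t > 0`. -/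
theorem stmt14 (a b : ℕ) (ha : 1 ≤ a) (hb : 1 ≤ b) (ζ : ℝ → ℝ)
    (hcont : ContinuousOn ζ (Set.Ioi 0)) (hzero : ∀ t ≤ (0 : ℝ), ζ t = 0)
    (hsupp : ∃ M : ℝ, ∀ t : ℝ, M < t → ζ t = 0)
    (hdecay : Tendsto (fun t : ℝ => t ^ (a + b) * ζ t) (nhdsWithin 0 (Set.Ioi 0)) (𝓝 0))
    (L : ℝ)
    (hL : Tendsto (fun r : ℝ => ∫ ρ in Set.Ioi r, ζ ρ * ρ ^ (a + b - 1))
      (nhdsWithin 0 (Set.Ioi 0)) (𝓝 L)) :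
    Tendsto
      (fun p : ℝ × ℝ => ∫ v in Set.Ioi p.2, ∫ u in Set.Ioi p.1,
        ζ (Real.sqrt (u ^ 2 + v ^ 2)) * u ^ (a - 1) * v ^ (b - 1))
      (nhdsWithin ((0 : ℝ), (0 : ℝ)) (Set.Ioi 0 ×ˢ Set.Ioi 0))
      (𝓝 (((a : ℝ) + b) * unitBallVol (a + b) /
        ((a : ℝ) * b * unitBallVol a * unitBallVol b) * L)) := by
  obtain ⟨M, hM⟩ := hsupp
  set φ : ℝ → ℝ := fun ρ => ζ ρ * ρ ^ (a + b - 1) with hφ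
  set F : ℝ → ℝ := fun r => ∫ ρ in Set.Ioi r, φ ρ with hFdef
  have hLF : Tendsto F (nhdsWithin 0 (Set.Ioi 0)) (𝓝 L) := hL
  set M' : ℝ := max M 1 with hM'
  have hM'pos : (0:ℝ) < M' := lt_of_lt_of_le one_pos (le_max_right _ _)
  have hζM' : ∀ ρ, M' < ρ → ζ ρ = 0 := fun ρ h => hM ρ (lt_of_le_of_lt (le_max_left _ _) h)
  have hφcont : ContinuousOn φ (Set.Ioi 0) := hcont.mul (continuous_pow _).continuousOn
  have hζmeas : Measurable ζ := meas_aux hcont hzero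
  have hφmeas : Measurable φ := hζmeas.mul (measurable_id.pow_const _)
  have hφzero : ∀ ρ, M' < ρ → φ ρ = 0 := fun ρ h => by simp [hφ, hζM' ρ h]
  have hφint : ∀ r : ℝ, 0 < r → IntegrableOn φ (Set.Ioi r) := by
    intro r hr
    have hIcc : IntegrableOn φ (Set.Icc r M') :=
      (hφcont.mono (fun x hx => lt_of_lt_of_le hr hx.1)).integrableOn_Icc
    have h2 : IntegrableOn φ (Set.Ioi M') :=
      (integrableOn_zero).congr_fun (fun x hx => (hφzero x hx).symm) measurableSet_Ioi
    apply ((hIcc.mono_set Set.Ioc_subset_Icc_self).union h2).mono_set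
    intro x hx
    rcases le_or_gt x M' with h' | h'
    · exact Or.inl ⟨hx, h'⟩
    · exact Or.inr h'
  have hFzero : ∀ r, M' ≤ r → F r = 0 := by
    intro r hr
    rw [hFdef]
    simp only
    rw [setIntegral_congr_fun measurableSet_Ioi
      (fun x hx => hφzero x (lt_of_le_of_lt hr hx) : Set.EqOn φ (fun _ => (0:ℝ)) (Set.Ioi r))]
    simp
  have hFsplit : ∀ δ r : ℝ, 0 < δ → δ ≤ r → F δ = (∫ ρ in Set.Ioc δ r, φ ρ) + F r := by
    intro δ r hδ hδr
    rw [hFdef]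
    simp only
    rw [← Set.Ioc_union_Ioi_eq_Ioi hδr,
      setIntegral_union (Set.Ioc_disjoint_Ioi le_rfl) measurableSet_Ioi
        ((hφint δ hδ).mono_set Set.Ioc_subset_Ioi_self) (hφint r (lt_of_lt_of_le hδ hδr))]
  have hFcont : ContinuousOn F (Set.Ioi 0) := by
    intro r₀ hr₀
    have hr₀' : (0:ℝ) < r₀ := hr₀
    have hδpos : 0 < r₀/2 := by positivity
    have hmem : r₀ ∈ Set.Ioo (r₀/2) (max M' r₀ + 1) :=
      ⟨by linarith, (le_max_right M' r₀).trans_lt (lt_add_one _)⟩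
    have hIccK : IntegrableOn φ (Set.Icc (r₀/2) (max M' r₀ + 1)) :=
      (hφcont.mono (fun x hx => lt_of_lt_of_le hδpos hx.1)).integrableOn_Icc
    have hprim := intervalIntegral.continuousOn_primitive (f := φ) (μ := volume)
      (a := r₀/2) (b := max M' r₀ + 1) hIccK
    have heq : Set.EqOn F (fun r => F (r₀/2) - ∫ ρ in Set.Ioc (r₀/2) r, φ ρ)
        (Set.Ioo (r₀/2) (max M' r₀ + 1)) := by
      intro r hr
      have := hFsplit (r₀/2) r hδpos hr.1.le
      simp only
      linarith
    have hcont2 : ContinuousOn F (Set.Ioo (r₀/2) (max M' r₀ + 1)) :=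
      ((continuousOn_const.sub (hprim.mono Set.Ioo_subset_Icc_self)).congr heq)
    exact (hcont2.continuousAt (isOpen_Ioo.mem_nhds hmem)).continuousWithinAt
  have hFbdd : ∃ C : ℝ, 0 ≤ C ∧ ∀ r : ℝ, 0 < r → ‖F r‖ ≤ C := by
    have h1 : ∀ᶠ r in nhdsWithin 0 (Set.Ioi 0), ‖F r‖ ≤ ‖L‖ + 1 :=
      hLF.norm.eventually (eventually_le_nhds (lt_add_one _))
    rw [eventually_nhdsWithin_iff, Metric.eventually_nhds_iff] at h1
    obtain ⟨ε, hε, hball⟩ := h1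
    obtain ⟨C₂, hC₂⟩ := (isCompact_Icc (a := ε/2) (b := M'+1)).exists_bound_of_continuousOn
      (hFcont.mono (fun x hx => lt_of_lt_of_le (by positivity) hx.1))
    refine ⟨max (‖L‖+1) (max C₂ 0), le_max_of_le_right (le_max_right _ _), ?_⟩
    intro r hr
    rcases lt_or_ge r ε with h | h
    · exact le_max_of_le_left
        (hball (by rw [Real.dist_eq, sub_zero, abs_of_pos hr]; exact h) hr)
    · rcases le_or_gt r (M'+1) with h2 | h2
      · exact le_max_of_le_right (le_max_of_le_left (hC₂ r ⟨by linarith, h2⟩))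
      · rw [hFzero r (by linarith)]
        simp only [norm_zero]
        positivity
  obtain ⟨C, hC0, hCb⟩ := hFbdd
  -- the key identity
  have key : ∀ s t : ℝ, 0 < s → 0 < t →
      (∫ v in Set.Ioi t, ∫ u in Set.Ioi s,
        ζ (Real.sqrt (u ^ 2 + v ^ 2)) * u ^ (a - 1) * v ^ (b - 1))
        = ∫ θ in Set.Ioo 0 (π/2),
            F (max (t / Real.cos θ) (s / Real.sin θ)) *
              (Real.sin θ ^ (a-1) * Real.cos θ ^ (b-1)) := by
    intro s t hs ht
    set W : ℝ × ℝ → ℝ := fun z =>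
      ζ (Real.sqrt (z.2 ^ 2 + z.1 ^ 2)) * z.2 ^ (a - 1) * z.1 ^ (b - 1) with hW
    set Q : Set (ℝ × ℝ) := Set.Ioi t ×ˢ Set.Ioi s with hQ
    set g : ℝ → ℝ := fun θ => max (t / Real.cos θ) (s / Real.sin θ) with hg
    set G : ℝ × ℝ → ℝ := fun z =>
      (Set.Ioi (g z.2)).indicator φ z.1 *
        (Real.sin z.2 ^ (a-1) * Real.cos z.2 ^ (b-1)) with hG
    have hQm : MeasurableSet Q := measurableSet_Ioi.prod measurableSet_Ioi
    have hWmeas : Measurable W := by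
      apply Measurable.mul
      apply Measurable.mul
      · exact hζmeas.comp
          (Real.continuous_sqrt.comp
            ((continuous_snd.pow 2).add (continuous_fst.pow 2))).measurable
      · exact measurable_snd.pow_const _
      · exact measurable_fst.pow_const _
    have hWcont : ContinuousOn W (Set.Icc t M' ×ˢ Set.Icc s M') := by
      apply ContinuousOn.mul
      apply ContinuousOn.mul
      · apply hcont.comp
          (Real.continuous_sqrt.comp
            ((continuous_snd.pow 2).add (continuous_fst.pow 2))).continuousOn
        intro z hz
        have hz1 : t ≤ z.1 := hz.1.1
        have hz2 : s ≤ z.2 := hz.2.1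
        show Real.sqrt (z.2 ^ 2 + z.1 ^ 2) ∈ Set.Ioi (0:ℝ)
        exact Set.mem_Ioi.mpr (Real.sqrt_pos.mpr (by nlinarith))
      · exact (continuous_snd.pow _).continuousOn
      · exact (continuous_fst.pow _).continuousOn
    have hWint : IntegrableOn W Q := by
      have hbox : IntegrableOn W (Set.Ioc t M' ×ˢ Set.Ioc s M') :=
        (hWcont.integrableOn_compact (isCompact_Icc.prod isCompact_Icc)).mono_set
          (Set.prod_mono Set.Ioc_subset_Icc_self Set.Ioc_subset_Icc_self)
      have hdiffzero : ∀ z ∈ Q \ (Set.Ioc t M' ×ˢ Set.Ioc s M'), W z = 0 := by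
        intro z hz
        obtain ⟨hzQ, hnz⟩ := hz
        have hz1 : t < z.1 := hzQ.1
        have hz2 : s < z.2 := hzQ.2
        have hMM : M' < z.1 ∨ M' < z.2 := by
          by_contra h
          push_neg at h
          exact hnz ⟨⟨hz1, h.1⟩, ⟨hz2, h.2⟩⟩
        have hge : M' < Real.sqrt (z.2 ^ 2 + z.1 ^ 2) := by
          rcases hMM with h | h
          · calc M' < z.1 := h
              _ = Real.sqrt (z.1 ^ 2) := (Real.sqrt_sq (by linarith)).symm
              _ ≤ Real.sqrt (z.2 ^ 2 + z.1 ^ 2) := Real.sqrt_le_sqrt (by nlinarith)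
          · calc M' < z.2 := h
              _ = Real.sqrt (z.2 ^ 2) := (Real.sqrt_sq (by linarith)).symm
              _ ≤ Real.sqrt (z.2 ^ 2 + z.1 ^ 2) := Real.sqrt_le_sqrt (by nlinarith)
        rw [hW]
        simp [hζM' _ hge]
      have hrest : IntegrableOn W (Q \ (Set.Ioc t M' ×ˢ Set.Ioc s M')) :=
        (integrableOn_zero).congr_fun (fun z hz => (hdiffzero z hz).symm)
          (hQm.diff (measurableSet_Ioc.prod measurableSet_Ioc))
      apply (hbox.union hrest).mono_set
      intro z hz
      by_cases h : z ∈ Set.Ioc t M' ×ˢ Set.Ioc s M'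
      · exact Or.inl h
      · exact Or.inr ⟨hz, h⟩
    have step1 : (∫ v in Set.Ioi t, ∫ u in Set.Ioi s,
        ζ (Real.sqrt (u ^ 2 + v ^ 2)) * u ^ (a - 1) * v ^ (b - 1)) = ∫ z in Q, W z := by
      have hWint' : IntegrableOn W (Set.Ioi t ×ˢ Set.Ioi s) (volume.prod volume) := by
        rw [← Measure.volume_eq_prod]
        exact hWint
      have h := setIntegral_prod (μ := volume) (ν := volume) W hWint'
      rw [← Measure.volume_eq_prod] at h
      rw [show (∫ z in Q, W z) = ∫ x in Set.Ioi t, ∫ y in Set.Ioi s, W (x, y) from h]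
    have step2 : (∫ z in Q, W z) = ∫ z, Q.indicator W z := (integral_indicator hQm).symm
    have hind0 : ∀ z : ℝ × ℝ, Q.indicator W z ≠ 0 → 0 < z.1 ∧ 0 < z.2 := by
      intro z hz
      have hzQ : z ∈ Q := by
        by_contra h
        exact hz (Set.indicator_of_notMem h W)
      exact ⟨lt_trans ht hzQ.1, lt_trans hs hzQ.2⟩
    have step3 := polar_quadrant (Q.indicator W) hind0
    have step4 : (∫ z in Set.Ioi (0:ℝ) ×ˢ Set.Ioo 0 (π/2),
        z.1 * Q.indicator W (z.1 * Real.cos z.2, z.1 * Real.sin z.2))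
        = ∫ z in Set.Ioi (0:ℝ) ×ˢ Set.Ioo 0 (π/2), G z := by
      apply setIntegral_congr_fun (measurableSet_Ioi.prod measurableSet_Ioo)
      intro z hz
      obtain ⟨hz1, hz2⟩ := hz
      have hρ : (0:ℝ) < z.1 := hz1
      have hc : 0 < Real.cos z.2 := Real.cos_pos_of_mem_Ioo
        ⟨by linarith [Real.pi_pos, hz2.1], hz2.2⟩
      have hsn : 0 < Real.sin z.2 := Real.sin_pos_of_pos_of_lt_pi hz2.1
        (by linarith [Real.pi_pos, hz2.2])
      simp only [hG]
      by_cases hgt : g z.2 < z.1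
      · have h1 : t < z.1 * Real.cos z.2 :=
          (div_lt_iff₀ hc).mp (lt_of_le_of_lt (le_max_left _ _) hgt)
        have h2 : s < z.1 * Real.sin z.2 :=
          (div_lt_iff₀ hsn).mp (lt_of_le_of_lt (le_max_right _ _) hgt)
        rw [Set.indicator_of_mem
            (show (z.1 * Real.cos z.2, z.1 * Real.sin z.2) ∈ Q from ⟨h1, h2⟩),
          Set.indicator_of_mem (Set.mem_Ioi.mpr hgt)]
        simp only [hW, hφ]
        have hsqrt : Real.sqrt ((z.1 * Real.sin z.2) ^ 2 + (z.1 * Real.cos z.2) ^ 2) = z.1 := by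
          rw [show (z.1 * Real.sin z.2) ^ 2 + (z.1 * Real.cos z.2) ^ 2 = z.1 ^ 2 by
            nlinarith [Real.sin_sq_add_cos_sq z.2], Real.sqrt_sq hρ.le]
        rw [hsqrt, show a + b - 1 = (a - 1) + (b - 1) + 1 by omega]
        ring
      · have hnotQ : (z.1 * Real.cos z.2, z.1 * Real.sin z.2) ∉ Q := by
          intro hmem
          apply hgt
          exact max_lt ((div_lt_iff₀ hc).mpr hmem.1) ((div_lt_iff₀ hsn).mpr hmem.2)
        rw [Set.indicator_of_notMem hnotQ, Set.indicator_of_notMem (by simpa using hgt)]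
        simp
    have hgmeas : Measurable g := by
      apply Measurable.max
      · exact measurable_const.div Real.continuous_cos.measurable
      · exact measurable_const.div Real.continuous_sin.measurable
    have hGmeas : Measurable G := by
      have h1 : G = fun z : ℝ × ℝ =>
          Set.indicator {w : ℝ × ℝ | g w.2 < w.1} (fun w => φ w.1) z *
            (Real.sin z.2 ^ (a-1) * Real.cos z.2 ^ (b-1)) := by
        funext z
        simp only [hG, Set.indicator_apply, Set.mem_Ioi, Set.mem_setOf_eq]
      rw [h1]
      apply Measurable.mul
      · exact (hφmeas.comp measurable_fst).indicator
          (measurableSet_lt (hgmeas.comp measurable_snd) measurable_fst)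
      · exact (((Real.continuous_sin.pow (a-1)).mul
          (Real.continuous_cos.pow (b-1))).measurable).comp measurable_snd
    have hGint : IntegrableOn G (Set.Ioi (0:ℝ) ×ˢ Set.Ioo 0 (π/2)) := by
      obtain ⟨Cφ, hCφ⟩ := (isCompact_Icc (a := t) (b := M')).exists_bound_of_continuousOn
        (hφcont.mono (fun x hx => lt_of_lt_of_le ht hx.1))
      have hCφ0 : (0:ℝ) ≤ max Cφ 0 := le_max_right _ _
      have hSfin : volume (Set.Ioc t M' ×ˢ Set.Ioo (0:ℝ) (π/2)) ≠ ⊤ := by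
        rw [Measure.volume_eq_prod, Measure.prod_prod]
        exact (ENNReal.mul_lt_top measure_Ioc_lt_top measure_Ioo_lt_top).ne
      have hSbound : ∀ᵐ z ∂(volume.restrict (Set.Ioc t M' ×ˢ Set.Ioo (0:ℝ) (π/2))),
          ‖G z‖ ≤ max Cφ 0 := by
        rw [ae_restrict_iff' (measurableSet_Ioc.prod measurableSet_Ioo)]
        apply Eventually.of_forall
        intro z hz
        simp only [hG]
        rw [norm_mul]
        have hIw : ‖Real.sin z.2 ^ (a-1) * Real.cos z.2 ^ (b-1)‖ ≤ 1 := by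
          rw [norm_mul, norm_pow, norm_pow]
          apply mul_le_one₀
          · exact pow_le_one₀ (norm_nonneg _)
              (by rw [Real.norm_eq_abs]; exact Real.abs_sin_le_one _)
          · positivity
          · exact pow_le_one₀ (norm_nonneg _)
              (by rw [Real.norm_eq_abs]; exact Real.abs_cos_le_one _)
        have hIn : ‖(Set.Ioi (g z.2)).indicator φ z.1‖ ≤ max Cφ 0 := by
          by_cases h : z.1 ∈ Set.Ioi (g z.2)
          · rw [Set.indicator_of_mem h]
            exact le_max_of_le_left (hCφ z.1 ⟨hz.1.1.le, hz.1.2⟩)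
          · rw [Set.indicator_of_notMem h]
            simpa using hCφ0
        calc ‖(Set.Ioi (g z.2)).indicator φ z.1‖ *
              ‖Real.sin z.2 ^ (a-1) * Real.cos z.2 ^ (b-1)‖
            ≤ (max Cφ 0) * 1 := mul_le_mul hIn hIw (norm_nonneg _) hCφ0
          _ = max Cφ 0 := mul_one _
      have hS : IntegrableOn G (Set.Ioc t M' ×ˢ Set.Ioo (0:ℝ) (π/2)) :=
        Measure.integrableOn_of_bounded hSfin hGmeas.aestronglyMeasurable hSbound
      have hzero2 : ∀ z ∈ (Set.Ioi (0:ℝ) ×ˢ Set.Ioo 0 (π/2)) \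
          (Set.Ioc t M' ×ˢ Set.Ioo (0:ℝ) (π/2)), G z = 0 := by
        intro z hz
        obtain ⟨⟨hz1, hz2⟩, hnz⟩ := hz
        have hz1' : z.1 ≤ t ∨ M' < z.1 := by
          rcases le_or_gt z.1 t with h | h
          · exact Or.inl h
          · rcases le_or_gt z.1 M' with h2 | h2
            · exact absurd ⟨⟨h, h2⟩, hz2⟩ hnz
            · exact Or.inr h2
        simp only [hG]
        rcases hz1' with h | h
        · have hc : 0 < Real.cos z.2 := Real.cos_pos_of_mem_Ioo
            ⟨by linarith [Real.pi_pos, hz2.1], hz2.2⟩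
          have hnm : z.1 ∉ Set.Ioi (g z.2) := by
            simp only [Set.mem_Ioi, not_lt]
            calc z.1 ≤ t := h
              _ ≤ t / Real.cos z.2 := (le_div_iff₀ hc).mpr
                  (by nlinarith [Real.cos_le_one z.2])
              _ ≤ g z.2 := le_max_left _ _
          rw [Set.indicator_of_notMem hnm, zero_mul]
        · rw [Set.indicator_apply_eq_zero.mpr (fun _ => hφzero _ h), zero_mul]
      have hrest2 : IntegrableOn G ((Set.Ioi (0:ℝ) ×ˢ Set.Ioo 0 (π/2)) \
          (Set.Ioc t M' ×ˢ Set.Ioo (0:ℝ) (π/2))) :=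
        (integrableOn_zero).congr_fun (fun z hz => (hzero2 z hz).symm)
          ((measurableSet_Ioi.prod measurableSet_Ioo).diff
            (measurableSet_Ioc.prod measurableSet_Ioo))
      apply (hS.union hrest2).mono_set
      intro z hz
      by_cases h : z ∈ Set.Ioc t M' ×ˢ Set.Ioo (0:ℝ) (π/2)
      · exact Or.inl h
      · exact Or.inr ⟨hz, h⟩
    have step5 : (∫ z in Set.Ioi (0:ℝ) ×ˢ Set.Ioo 0 (π/2), G z)
        = ∫ θ in Set.Ioo (0:ℝ) (π/2), ∫ ρ in Set.Ioi (0:ℝ), G (ρ, θ) := by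
      rw [Measure.volume_eq_prod, ← Measure.prod_restrict]
      apply integral_prod_symm
      rw [Measure.prod_restrict, ← Measure.volume_eq_prod]
      exact hGint
    have step6 : ∀ θ ∈ Set.Ioo (0:ℝ) (π/2),
        (∫ ρ in Set.Ioi (0:ℝ), G (ρ, θ))
          = F (g θ) * (Real.sin θ ^ (a-1) * Real.cos θ ^ (b-1)) := by
      intro θ hθ
      have hc : 0 < Real.cos θ := Real.cos_pos_of_mem_Ioo
        ⟨by linarith [Real.pi_pos, hθ.1], hθ.2⟩
      have hgθ : 0 < g θ := lt_of_lt_of_le (div_pos ht hc) (le_max_left _ _)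
      simp only [hG]
      rw [integral_mul_const]
      congr 1
      rw [setIntegral_indicator measurableSet_Ioi,
        show Set.Ioi (0:ℝ) ∩ Set.Ioi (g θ) = Set.Ioi (g θ) by
          rw [Set.Ioi_inter_Ioi, sup_eq_right.mpr hgθ.le]]
    calc (∫ v in Set.Ioi t, ∫ u in Set.Ioi s,
          ζ (Real.sqrt (u ^ 2 + v ^ 2)) * u ^ (a - 1) * v ^ (b - 1))
        = ∫ z in Q, W z := step1
      _ = ∫ z, Q.indicator W z := step2
      _ = ∫ z in Set.Ioi (0:ℝ) ×ˢ Set.Ioo 0 (π/2),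
            z.1 * Q.indicator W (z.1 * Real.cos z.2, z.1 * Real.sin z.2) := step3.symm
      _ = ∫ z in Set.Ioi (0:ℝ) ×ˢ Set.Ioo 0 (π/2), G z := step4
      _ = ∫ θ in Set.Ioo (0:ℝ) (π/2), ∫ ρ in Set.Ioi (0:ℝ), G (ρ, θ) := step5
      _ = ∫ θ in Set.Ioo (0:ℝ) (π/2),
            F (g θ) * (Real.sin θ ^ (a-1) * Real.cos θ ^ (b-1)) :=
          setIntegral_congr_fun measurableSet_Ioo (fun θ hθ => step6 θ hθ)
      _ = ∫ θ in Set.Ioo 0 (π/2),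
            F (max (t / Real.cos θ) (s / Real.sin θ)) *
              (Real.sin θ ^ (a-1) * Real.cos θ ^ (b-1)) := by simp only [hg]
  -- the constant
  have hcval : (∫ θ in Set.Ioo 0 (π/2), Real.sin θ ^ (a-1) * Real.cos θ ^ (b-1))
      = Real.Gamma ((b:ℝ)/2) * Real.Gamma ((a:ℝ)/2)
        / (2 * Real.Gamma (((a:ℝ)+(b:ℝ))/2)) := by
    have h1 : (∫ θ in Set.Ioo 0 (π/2), Real.sin θ ^ (a-1) * Real.cos θ ^ (b-1))
        = ∫ θ in Set.Ioo 0 (π/2), Real.cos θ ^ (b-1) * Real.sin θ ^ (a-1) := by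
      apply setIntegral_congr_fun measurableSet_Ioo
      intro θ _
      ring
    rw [h1, cos_sin_integral (b-1) (a-1)]
    have hca : ((a-1 : ℕ):ℝ) = (a:ℝ) - 1 := by
      rw [Nat.cast_sub ha]; norm_num
    have hcb : ((b-1 : ℕ):ℝ) = (b:ℝ) - 1 := by
      rw [Nat.cast_sub hb]; norm_num
    rw [hca, hcb]
    congr 3 <;> ring
  -- dominated convergence
  have hDCT : Tendsto
      (fun p : ℝ × ℝ => ∫ θ in Set.Ioo 0 (π/2),
        F (max (p.2 / Real.cos θ) (p.1 / Real.sin θ)) *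
          (Real.sin θ ^ (a-1) * Real.cos θ ^ (b-1)))
      (nhdsWithin ((0 : ℝ), (0 : ℝ)) (Set.Ioi 0 ×ˢ Set.Ioi 0))
      (𝓝 (∫ θ in Set.Ioo 0 (π/2), L * (Real.sin θ ^ (a-1) * Real.cos θ ^ (b-1)))) := by
    apply tendsto_integral_filter_of_dominated_convergence (bound := fun _ => C)
    · filter_upwards [self_mem_nhdsWithin] with p hp
      have hgc : ContinuousOn (fun θ => max (p.2 / Real.cos θ) (p.1 / Real.sin θ))
          (Set.Ioo 0 (π/2)) := by
        have hc1 : ContinuousOn (fun θ : ℝ => p.2 / Real.cos θ) (Set.Ioo 0 (π/2)) :=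
          continuousOn_const.div Real.continuous_cos.continuousOn
            (fun θ hθ => (Real.cos_pos_of_mem_Ioo
              ⟨by linarith [Real.pi_pos, hθ.1], hθ.2⟩).ne')
        have hc2 : ContinuousOn (fun θ : ℝ => p.1 / Real.sin θ) (Set.Ioo 0 (π/2)) :=
          continuousOn_const.div Real.continuous_sin.continuousOn
            (fun θ hθ => (Real.sin_pos_of_pos_of_lt_pi hθ.1
              (by linarith [Real.pi_pos, hθ.2])).ne')
        exact continuous_max.comp_continuousOn (hc1.prodMk hc2)
      have hmaps : ∀ θ ∈ Set.Ioo (0:ℝ) (π/2),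
          max (p.2 / Real.cos θ) (p.1 / Real.sin θ) ∈ Set.Ioi (0:ℝ) := by
        intro θ hθ
        have hc : 0 < Real.cos θ := Real.cos_pos_of_mem_Ioo
          ⟨by linarith [Real.pi_pos, hθ.1], hθ.2⟩
        exact lt_of_lt_of_le (div_pos hp.2 hc) (le_max_left _ _)
      have hcontF : ContinuousOn (fun θ => F (max (p.2 / Real.cos θ) (p.1 / Real.sin θ)) *
          (Real.sin θ ^ (a-1) * Real.cos θ ^ (b-1))) (Set.Ioo 0 (π/2)) :=
        (hFcont.comp hgc hmaps).mul
          ((Real.continuous_sin.pow _).mul (Real.continuous_cos.pow _)).continuousOn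
      exact hcontF.aestronglyMeasurable measurableSet_Ioo
    · filter_upwards [self_mem_nhdsWithin] with p hp
      rw [ae_restrict_iff' measurableSet_Ioo]
      apply Eventually.of_forall
      intro θ hθ
      have hc : 0 < Real.cos θ := Real.cos_pos_of_mem_Ioo
        ⟨by linarith [Real.pi_pos, hθ.1], hθ.2⟩
      have hgt : 0 < max (p.2 / Real.cos θ) (p.1 / Real.sin θ) :=
        lt_of_lt_of_le (div_pos hp.2 hc) (le_max_left _ _)
      have hw : ‖Real.sin θ ^ (a-1) * Real.cos θ ^ (b-1)‖ ≤ 1 := by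
        rw [norm_mul, norm_pow, norm_pow]
        apply mul_le_one₀
        · exact pow_le_one₀ (norm_nonneg _) (by rw [Real.norm_eq_abs]; exact Real.abs_sin_le_one θ)
        · positivity
        · exact pow_le_one₀ (norm_nonneg _) (by rw [Real.norm_eq_abs]; exact Real.abs_cos_le_one θ)
      calc ‖F (max (p.2 / Real.cos θ) (p.1 / Real.sin θ)) *
            (Real.sin θ ^ (a-1) * Real.cos θ ^ (b-1))‖
          = ‖F (max (p.2 / Real.cos θ) (p.1 / Real.sin θ))‖ *
            ‖Real.sin θ ^ (a-1) * Real.cos θ ^ (b-1)‖ := norm_mul _ _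
        _ ≤ C * 1 := mul_le_mul (hCb _ hgt) hw (norm_nonneg _) hC0
        _ = C := mul_one C
    · exact integrableOn_const (C := C) (s := Set.Ioo 0 (π/2)) (μ := volume)
        measure_Ioo_lt_top.ne
    · rw [ae_restrict_iff' measurableSet_Ioo]
      apply Eventually.of_forall
      intro θ hθ
      have hc : 0 < Real.cos θ := Real.cos_pos_of_mem_Ioo
        ⟨by linarith [Real.pi_pos, hθ.1], hθ.2⟩
      have hgtend : Tendsto (fun p : ℝ × ℝ => max (p.2 / Real.cos θ) (p.1 / Real.sin θ))
          (nhdsWithin ((0 : ℝ), (0 : ℝ)) (Set.Ioi 0 ×ˢ Set.Ioi 0))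
          (nhdsWithin 0 (Set.Ioi 0)) := by
        rw [tendsto_nhdsWithin_iff]
        constructor
        · have h0s : Tendsto (fun p : ℝ × ℝ => p.2)
              (nhdsWithin ((0 : ℝ), (0 : ℝ)) (Set.Ioi 0 ×ˢ Set.Ioi 0)) (𝓝 0) :=
            (continuous_snd.tendsto ((0:ℝ),(0:ℝ))).mono_left nhdsWithin_le_nhds
          have h0f : Tendsto (fun p : ℝ × ℝ => p.1)
              (nhdsWithin ((0 : ℝ), (0 : ℝ)) (Set.Ioi 0 ×ˢ Set.Ioi 0)) (𝓝 0) :=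
            (continuous_fst.tendsto ((0:ℝ),(0:ℝ))).mono_left nhdsWithin_le_nhds
          have h1 : Tendsto (fun p : ℝ × ℝ => p.2 / Real.cos θ)
              (nhdsWithin ((0 : ℝ), (0 : ℝ)) (Set.Ioi 0 ×ˢ Set.Ioi 0)) (𝓝 0) := by
            simpa using h0s.div_const (Real.cos θ)
          have h2 : Tendsto (fun p : ℝ × ℝ => p.1 / Real.sin θ)
              (nhdsWithin ((0 : ℝ), (0 : ℝ)) (Set.Ioi 0 ×ˢ Set.Ioi 0)) (𝓝 0) := by
            simpa using h0f.div_const (Real.sin θ)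
          have := h1.max h2
          simpa using this
        · filter_upwards [self_mem_nhdsWithin] with p hp
          exact lt_of_lt_of_le (div_pos hp.2 hc) (le_max_left _ _)
      exact (hLF.comp hgtend).mul_const _
  -- conclude
  have hfinalval : (∫ θ in Set.Ioo 0 (π/2), L * (Real.sin θ ^ (a-1) * Real.cos θ ^ (b-1)))
      = ((a : ℝ) + b) * unitBallVol (a + b) /
        ((a : ℝ) * b * unitBallVol a * unitBallVol b) * L := by
    rw [integral_const_mul, hcval, const_eq a b ha hb]
    ring
  rw [← hfinalval]
  apply hDCT.congr'
  filter_upwards [self_mem_nhdsWithin] with p hp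
  exact (key p.1 p.2 hp.1 hp.2).symm
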